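/- Let u : ℝ² → S² ⊂ ℝ³ be a C¹ map with finite energy, i.e. ∫_{ℝ²} |∇u|² dx < ∞. Then (1/2)∫_{ℝ²} |∇u|² dx ≥ 4π |deg(u)|, where deg(u) = (1/4π)∫_{ℝ²} ∂_{x₁}u · (u × ∂_{x₂}u) dx (the integrand is absolutely integrable since |∂_{x₁}u · (u × ∂_{x₂}u)| ≤ (1/2)|∇u|² pointwise). -/

import Mathlib

noncomputable section
open MeasureTheory Real Set Filter
open scoped RealInnerProductSpace Topology

/-- The plane `ℝ²` with its Euclidean structure. -/
abbrev V2 : Type := EuclideanSpace ℝ (Fin 2)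
/-- The space `ℝ³` with its Euclidean structure. -/
abbrev V3 : Type := EuclideanSpace ℝ (Fin 3)

/-- The point `(a, b) ∈ ℝ²`. -/
def pt2 (a b : ℝ) : V2 := WithLp.toLp 2 ![a, b]

/-- The cross product in `ℝ³`. -/
def cross (u v : V3) : V3 :=
  WithLp.toLp 2 ![u 1 * v 2 - u 2 * v 1, u 2 * v 0 - u 0 * v 2, u 0 * v 1 - u 1 * v 0]

/-- `e^{θR}`: rotation by angle `θ` about the `x₃`-axis. -/
def rot3 (θ : ℝ) (v : V3) : V3 :=
  WithLp.toLp 2 ![Real.cos θ * v 0 - Real.sin θ * v 1, Real.sin θ * v 0 + Real.cos θ * v 1, v 2]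

/-- The generator `R` of horizontal rotations, `Rv = k × v` with `k = (0,0,1)`. -/
def Rgen (v : V3) : V3 := WithLp.toLp 2 ![-(v 1), v 0, 0]

/-- Directional (partial) derivative of a map `ℝ² → ℝ³` in direction `e`. -/
def pd (e : V2) (f : V2 → V3) (x : V2) : V3 := fderiv ℝ f x e

/-- The componentwise Laplacian on `ℝ²`. -/
def lap (f : V2 → V3) (x : V2) : V3 :=
  pd (pt2 1 0) (pd (pt2 1 0) f) x + pd (pt2 0 1) (pd (pt2 0 1) f) x

/-- Squared homogeneous Sobolev seminorm `‖f‖_{Ḣ^k}² = ∫ |∇^k f|²`. -/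
def sobSq (k : ℕ) (f : V2 → V3) : ℝ := ∫ x : V2, ‖iteratedFDeriv ℝ k f x‖ ^ 2

/-- The degree one harmonic map `φ(x) = e^{θR} Q(r)`,
`Q = (h₁, 0, h₃)`, `h₁(r) = 2r/(r²+1)`, `h₃(r) = (r²-1)/(r²+1)`. -/
def phi1 (x : V2) : V3 :=
  WithLp.toLp 2 ![2 * x 0 / (x 0 ^ 2 + x 1 ^ 2 + 1), 2 * x 1 / (x 0 ^ 2 + x 1 ^ 2 + 1),
    (x 0 ^ 2 + x 1 ^ 2 - 1) / (x 0 ^ 2 + x 1 ^ 2 + 1)]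


section AuxEnergy

private lemma aux_real' (a0 a1 a2 w0 w1 w2 B : ℝ) (hW : w0 ^ 2 + w1 ^ 2 + w2 ^ 2 ≤ B) :
    |a0 * w0 + a1 * w1 + a2 * w2| ≤ (a0 ^ 2 + a1 ^ 2 + a2 ^ 2 + B) / 2 := by
  rw [abs_le]
  constructor <;>
    nlinarith [sq_nonneg (a0 - w0), sq_nonneg (a1 - w1), sq_nonneg (a2 - w2),
      sq_nonneg (a0 + w0), sq_nonneg (a1 + w1), sq_nonneg (a2 + w2)]

private lemma key_cross_bound (a b c : V3) (hc : ‖c‖ = 1) :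
    |⟪a, cross c b⟫| ≤ (‖a‖ ^ 2 + ‖b‖ ^ 2) / 2 := by
  have hA : ‖a‖ ^ 2 = a 0 ^ 2 + a 1 ^ 2 + a 2 ^ 2 := by
    rw [EuclideanSpace.norm_eq, Real.sq_sqrt (by positivity)]
    simp [Fin.sum_univ_three]
  have hB : ‖b‖ ^ 2 = b 0 ^ 2 + b 1 ^ 2 + b 2 ^ 2 := by
    rw [EuclideanSpace.norm_eq, Real.sq_sqrt (by positivity)]
    simp [Fin.sum_univ_three]
  have hC : c 0 ^ 2 + c 1 ^ 2 + c 2 ^ 2 = 1 := by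
    have h : ‖c‖ ^ 2 = c 0 ^ 2 + c 1 ^ 2 + c 2 ^ 2 := by
      rw [EuclideanSpace.norm_eq, Real.sq_sqrt (by positivity)]
      simp [Fin.sum_univ_three]
    rw [← h, hc]; norm_num
  have hI : ⟪a, cross c b⟫ =
      a 0 * (c 1 * b 2 - c 2 * b 1) + a 1 * (c 2 * b 0 - c 0 * b 2)
        + a 2 * (c 0 * b 1 - c 1 * b 0) := by
    simp [PiLp.inner_apply, Fin.sum_univ_three, cross]; ring
  have hW : (c 1 * b 2 - c 2 * b 1) ^ 2 + (c 2 * b 0 - c 0 * b 2) ^ 2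
      + (c 0 * b 1 - c 1 * b 0) ^ 2 ≤ b 0 ^ 2 + b 1 ^ 2 + b 2 ^ 2 := by
    nlinarith [sq_nonneg (c 0 * b 0 + c 1 * b 1 + c 2 * b 2),
      sq_nonneg (b 0 ^ 2 + b 1 ^ 2 + b 2 ^ 2)]
  rw [hA, hB, hI]
  exact aux_real' _ _ _ _ _ _ _ hW

end AuxEnergy

/-- the energy of a finite-energy map `u : ℝ² → S²` is at least `4π|deg u|`. -/
theorem energy_ge_four_pi_deg (u : V2 → V3)
    (hu : ContDiff ℝ 1 u) (hsph : ∀ x, ‖u x‖ = 1)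
    (hfin : Integrable (fun x : V2 => ‖pd (pt2 1 0) u x‖ ^ 2 + ‖pd (pt2 0 1) u x‖ ^ 2)) :
    (1 / 2) * (∫ x : V2, (‖pd (pt2 1 0) u x‖ ^ 2 + ‖pd (pt2 0 1) u x‖ ^ 2)) ≥
      4 * π * |(1 / (4 * π)) *
        ∫ x : V2, ⟪pd (pt2 1 0) u x, cross (u x) (pd (pt2 0 1) u x)⟫| := by
  set f : V2 → ℝ := fun x => ⟪pd (pt2 1 0) u x, cross (u x) (pd (pt2 0 1) u x)⟫ with hfdef
  have hdu : Continuous (fderiv ℝ u) := hu.continuous_fderiv one_ne_zero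
  have h1 : Continuous fun x => pd (pt2 1 0) u x := hdu.clm_apply continuous_const
  have h2 : Continuous fun x => pd (pt2 0 1) u x := hdu.clm_apply continuous_const
  have hui : ∀ i, Continuous fun x => u x i := fun i => (continuous_apply i).comp ((PiLp.continuous_ofLp 2 _).comp hu.continuous)
  have h2i : ∀ i, Continuous fun x => pd (pt2 0 1) u x i := fun i =>
    (continuous_apply i).comp ((PiLp.continuous_ofLp 2 _).comp h2)
  have hc : Continuous fun x => cross (u x) (pd (pt2 0 1) u x) := by
    unfold cross
    apply (PiLp.continuous_toLp 2 _).comp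
    apply continuous_pi
    intro i
    fin_cases i <;> simp <;> fun_prop
  have hfc : Continuous f := h1.inner hc
  have hbound : ∀ x, |f x| ≤
      (1 / 2) * (‖pd (pt2 1 0) u x‖ ^ 2 + ‖pd (pt2 0 1) u x‖ ^ 2) := by
    intro x
    have := key_cross_bound (pd (pt2 1 0) u x) (pd (pt2 0 1) u x) (u x) (hsph x)
    simpa [hfdef] using this.trans_eq (by ring)
  have hg : Integrable (fun x : V2 =>
      (1 / 2) * (‖pd (pt2 1 0) u x‖ ^ 2 + ‖pd (pt2 0 1) u x‖ ^ 2)) := hfin.const_mul _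
  have hf : Integrable f :=
    hg.mono' hfc.aestronglyMeasurable
      (Filter.Eventually.of_forall fun x => by
        simpa [Real.norm_eq_abs] using hbound x)
  have hstep : |∫ x : V2, f x| ≤
      (1 / 2) * (∫ x : V2, (‖pd (pt2 1 0) u x‖ ^ 2 + ‖pd (pt2 0 1) u x‖ ^ 2)) := by
    calc |∫ x : V2, f x| ≤ ∫ x : V2, |f x| := by
          simpa [Real.norm_eq_abs] using norm_integral_le_integral_norm f
      _ ≤ ∫ x : V2, (1 / 2) * (‖pd (pt2 1 0) u x‖ ^ 2 + ‖pd (pt2 0 1) u x‖ ^ 2) :=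
          integral_mono hf.abs hg hbound
      _ = (1 / 2) * ∫ x : V2, (‖pd (pt2 1 0) u x‖ ^ 2 + ‖pd (pt2 0 1) u x‖ ^ 2) :=
          integral_const_mul _ _
  have hpi : (0:ℝ) < 4 * π := by positivity
  have habs : 4 * π * |(1 / (4 * π)) * ∫ x : V2, f x| = |∫ x : V2, f x| := by
    rw [abs_mul, abs_of_nonneg (by positivity : (0:ℝ) ≤ 1 / (4 * π))]
    field_simp
  rw [ge_iff_le, habs]
  exact hstep
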